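/- Let m ≥ 0 and let V ∈ ℓ¹(ℤ, ℂ^{2×2}) satisfy 0 < ‖V‖₁² < m²/2 + 1 − m·√(m²/4 + 1). Define λ₊ := √(m² + 2(1 − ‖V‖₁² + √((1 − ‖V‖₁²)² − ‖V‖₁² m²))) and λ₋ := √(m² + 2(1 − ‖V‖₁² − √((1 − ‖V‖₁²)² − ‖V‖₁² m²))). Then D_V has no (real, embedded) eigenvalue in the union of intervals (−λ₊, −λ₋) ∪ (λ₋, λ₊). -/

import Mathlib

open scoped ComplexOrder
open Matrix

noncomputable section

abbrev Mat2 : Type := Matrix (Fin 2) (Fin 2) ℂ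
abbrev Vec2 : Type := EuclideanSpace ℂ (Fin 2)
abbrev Hsp : Type := lp (fun _ : ℤ => Vec2) 2

/-- A `2×2` complex matrix acting on `ℂ²` as a continuous linear map. -/
def mAct (A : Mat2) : Vec2 →L[ℂ] Vec2 := Matrix.toEuclideanCLM (𝕜 := ℂ) A

/-- The spectral (operator) norm of a `2×2` complex matrix. -/
def specNorm (A : Mat2) : ℝ := ‖mAct A‖

/-- The Hilbert–Schmidt (Frobenius) norm of a `2×2` complex matrix. -/
def hsNorm (A : Mat2) : ℝ := Real.sqrt (∑ i, ∑ j, ‖A i j‖ ^ 2)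

namespace Matrix.PosSemidef

/-- The positive semidefinite square root of a positive semidefinite matrix
(restored with its former Mathlib definition). -/
def sqrt {n 𝕜 : Type*} [Fintype n] [DecidableEq n] [RCLike 𝕜] {A : Matrix n n 𝕜}
    (hA : A.PosSemidef) : Matrix n n 𝕜 :=
  hA.1.eigenvectorUnitary.1 * diagonal ((↑) ∘ (Real.sqrt ·) ∘ hA.1.eigenvalues) *
  (star hA.1.eigenvectorUnitary : Matrix n n 𝕜)

theorem posSemidef_sqrt {n 𝕜 : Type*} [Fintype n] [DecidableEq n] [RCLike 𝕜]
    {A : Matrix n n 𝕜} (hA : A.PosSemidef) : hA.sqrt.PosSemidef := by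
  unfold sqrt
  exact (posSemidef_diagonal_iff.mpr (fun i => by simp [Function.comp, Real.sqrt_nonneg])).mul_mul_conjTranspose_same
    (hA.1.eigenvectorUnitary : Matrix n n 𝕜)

end Matrix.PosSemidef

def bMat (m : ℝ) : Mat2 := !![(-m : ℂ), 1; 1, (m : ℂ)]

def aMat : Mat2 := !![0, 0; -1, 0]

/-- `D0` is the free discrete Dirac operator with mass `m`. -/
def IsFreeDirac (m : ℝ) (D0 : Hsp →L[ℂ] Hsp) : Prop :=
  ∀ u : Hsp, ∀ n : ℤ,
    (D0 u) n = mAct aMat.transpose (u (n - 1)) + mAct (bMat m) (u n) + mAct aMat (u (n + 1))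

/-- `Vop` is the block-diagonal operator with blocks `υ n`. -/
def IsBlockDiagOp (υ : ℤ → Mat2) (Vop : Hsp →L[ℂ] Hsp) : Prop :=
  ∀ u : Hsp, ∀ n : ℤ, (Vop u) n = mAct (υ n) (u n)

/-- The spectrum `[−√(m²+4), −m] ∪ [m, √(m²+4)]` as a subset of `ℂ`. -/
def sigma0 (m : ℝ) : Set ℂ :=
  Complex.ofReal '' (Set.Icc (-Real.sqrt (m ^ 2 + 4)) (-m) ∪ Set.Icc m (Real.sqrt (m ^ 2 + 4)))

def T0mat (m : ℝ) (lam k : ℂ) : Mat2 :=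
  (k⁻¹ - k)⁻¹ • !![lam - m, 1 - k; 1 - k, lam + m]

def T1mat (m : ℝ) (lam k : ℂ) : Mat2 :=
  (k * (k⁻¹ - k)⁻¹) • !![lam - m, 1 - k; 1 - k⁻¹, lam + m]

def Tmat (m : ℝ) (lam k : ℂ) : ℤ → Mat2 := fun j =>
  if j = 0 then T0mat m lam k
  else if 0 < j then k ^ (j.toNat - 1) • T1mat m lam k
  else (k ^ ((-j).toNat - 1) • T1mat m lam k).transpose

def wMat (υ : ℤ → Mat2) (n : ℤ) : Mat2 :=
  (Matrix.posSemidef_conjTranspose_mul_self (υ n)).sqrt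

def sqrtwMat (υ : ℤ → Mat2) (n : ℤ) : Mat2 :=
  (Matrix.posSemidef_conjTranspose_mul_self (υ n)).posSemidef_sqrt.sqrt

/-- The Birman–Schwinger operator `K(z) = √W (D₀ − z)⁻¹ U √W`. -/
def Kop (D0 sW Uop : Hsp →L[ℂ] Hsp) (z : ℂ) : Hsp →L[ℂ] Hsp :=
  sW * Ring.inverse (D0 - z • (1 : Hsp →L[ℂ] Hsp)) * Uop * sW

/-- The element of `ℓ²(ℤ, ℂ²)` supported at site `j` equal to the `β`-th standard basis vector. -/
def deltaVec (j : ℤ) (β : Fin 2) : Hsp := lp.single 2 j (EuclideanSpace.single β (1 : ℂ))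


/-! ### Auxiliary lemmas -/

lemma mAct_apply' (A : Mat2) (v : Vec2) (i : Fin 2) :
    mAct A v i = A i 0 * v 0 + A i 1 * v 1 := by
  have : mAct A v = (WithLp.equiv 2 _).symm (A.toLin' (WithLp.equiv 2 _ v)) := rfl
  rw [this]
  simp [Matrix.toLin'_apply, Matrix.mulVec, dotProduct, Fin.sum_univ_two]
  fin_cases i <;> simp

lemma coord_le_norm' (v : Vec2) (i : Fin 2) : ‖v i‖ ≤ ‖v‖ := by
  rw [EuclideanSpace.norm_eq]
  rw [show ‖v i‖ = Real.sqrt (‖v i‖ ^ 2) by rw [Real.sqrt_sq (norm_nonneg _)]]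
  apply Real.sqrt_le_sqrt
  fin_cases i <;> simp [Fin.sum_univ_two] <;> positivity

lemma entry_le_specNorm (A : Mat2) (i j : Fin 2) : ‖A i j‖ ≤ specNorm A := by
  have h1 : A i j = mAct A (EuclideanSpace.single j 1) i := by
    rw [mAct_apply']
    fin_cases j <;> simp [EuclideanSpace.single_apply]
  calc ‖A i j‖ ≤ ‖mAct A (EuclideanSpace.single j 1)‖ := h1 ▸ coord_le_norm' _ i
    _ ≤ ‖mAct A‖ * ‖EuclideanSpace.single j (1:ℂ)‖ := (mAct A).le_opNorm _
    _ = specNorm A := by rw [EuclideanSpace.norm_single]; simp [specNorm]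

lemma levinson_aux (r c : ℕ → ℝ) (hr : ∀ n, 0 ≤ r n) (hc : ∀ n, 0 ≤ c n)
    (hrec : ∀ n, (1 - c n) * r n ≤ r (n+1))
    (hsum : ∀ n, (∑ j ∈ Finset.range n, c j) ≤ 1/2)
    (hlim : Filter.Tendsto r Filter.atTop (nhds 0)) : r 0 = 0 := by
  have hkey : ∀ n, (1 - ∑ j ∈ Finset.range n, c j) * r 0 ≤ r n := by
    intro n
    induction n with
    | zero => simp
    | succ n ih =>
      have h1 : 0 ≤ ∑ j ∈ Finset.range n, c j := Finset.sum_nonneg fun j _ => hc j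
      have h2 := hsum (n+1)
      rw [Finset.sum_range_succ] at h2 ⊢
      have hcn := hc n
      calc (1 - (∑ j ∈ Finset.range n, c j + c n)) * r 0
          ≤ (1 - c n) * ((1 - ∑ j ∈ Finset.range n, c j) * r 0) := by
            nlinarith [mul_nonneg (mul_nonneg hcn h1) (hr 0)]
        _ ≤ (1 - c n) * r n := by
            apply mul_le_mul_of_nonneg_left ih; nlinarith
        _ ≤ r (n+1) := hrec n
  have h2 : ∀ n, r 0 / 2 ≤ r n := by
    intro n
    refine le_trans ?_ (hkey n)
    have := hsum n
    nlinarith [hr 0]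
  have h3 : r 0 / 2 ≤ 0 := ge_of_tendsto hlim (Filter.Eventually.of_forall h2)
  linarith [hr 0]

set_option maxHeartbeats 1000000 in
lemma window_aux (m Q x lamP lamM : ℝ) (hm : 0 ≤ m) (hQ0 : 0 ≤ Q)
    (hpos : 0 < Q ^ 2)
    (hsmall : Q ^ 2 < m ^ 2 / 2 + 1 - m * Real.sqrt (m ^ 2 / 4 + 1))
    (hlamP : lamP =
      Real.sqrt (m ^ 2 + 2 * (1 - Q ^ 2 + Real.sqrt ((1 - Q ^ 2) ^ 2 - Q ^ 2 * m ^ 2))))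
    (hlamM : lamM =
      Real.sqrt (m ^ 2 + 2 * (1 - Q ^ 2 - Real.sqrt ((1 - Q ^ 2) ^ 2 - Q ^ 2 * m ^ 2))))
    (hx : x ∈ Set.Ioo (-lamP) (-lamM) ∪ Set.Ioo lamM lamP) :
    m ^ 2 < x ^ 2 ∧ x ^ 2 < m ^ 2 + 4 ∧ Q < 1 := by
  set R := Real.sqrt (m ^ 2 / 4 + 1) with hR
  have hR0 : 0 ≤ R := Real.sqrt_nonneg _
  have hR2 : R ^ 2 = m ^ 2 / 4 + 1 := Real.sq_sqrt (by positivity)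
  clear_value R
  clear hR
  have hRm : m / 2 ≤ R := by nlinarith
  have hQ1 : Q ^ 2 < 1 := by nlinarith
  have hQlt : Q < 1 := by nlinarith
  set Δ := (1 - Q ^ 2) ^ 2 - Q ^ 2 * m ^ 2 with hΔ
  have hΔpos : 0 < Δ := by
    have hfact : Δ = ((1 + m^2/2 - m*R) - Q ^ 2) * ((1 + m^2/2 + m*R) - Q ^ 2) := by
      rw [hΔ]; nlinarith [hR2]
    rw [hfact]
    have h1 : 0 < (1 + m^2/2 - m*R) - Q ^ 2 := by nlinarith
    have h2 : 0 < (1 + m^2/2 + m*R) - Q ^ 2 := by nlinarith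
    positivity
  have hΔle : Δ ≤ (1 - Q ^ 2)^2 := by rw [hΔ]; nlinarith
  have hΔlt : 0 < m → Δ < (1 - Q ^ 2)^2 := by
    intro h; rw [hΔ]; nlinarith [mul_pos hpos (pow_pos h 2)]
  have hΔm0 : m = 0 → Δ = (1 - Q ^ 2)^2 := by intro h; rw [hΔ, h]; ring
  clear_value Δ
  clear hΔ
  set S := Real.sqrt Δ with hS
  have hS0 : 0 ≤ S := Real.sqrt_nonneg _
  have hS2 : S ^ 2 = Δ := Real.sq_sqrt hΔpos.le
  have hSle : S ≤ 1 - Q ^ 2 := by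
    rw [hS]
    calc Real.sqrt Δ ≤ Real.sqrt ((1 - Q ^ 2)^2) := Real.sqrt_le_sqrt hΔle
      _ = 1 - Q ^ 2 := Real.sqrt_sq (by nlinarith)
  have hSlt : 0 < m → S < 1 - Q ^ 2 := fun h => by nlinarith [hΔlt h]
  have hSm0 : m = 0 → S = 1 - Q ^ 2 := by
    intro h; rw [hS, hΔm0 h]; exact Real.sqrt_sq (by nlinarith)
  clear_value S
  clear hS
  have hlamM2 : lamM ^ 2 = m ^ 2 + 2 * (1 - Q ^ 2 - S) := by
    rw [hlamM]; exact Real.sq_sqrt (by nlinarith)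
  have hlamP2 : lamP ^ 2 = m ^ 2 + 2 * (1 - Q ^ 2 + S) := by
    rw [hlamP]; exact Real.sq_sqrt (by nlinarith)
  have hlamM0 : 0 ≤ lamM := hlamM ▸ Real.sqrt_nonneg _
  have hlamP0 : 0 ≤ lamP := hlamP ▸ Real.sqrt_nonneg _
  have hxx : lamM < |x| ∧ |x| < lamP := by
    rcases hx with ⟨h1, h2⟩ | ⟨h1, h2⟩
    · rw [abs_of_neg (by linarith)]; constructor <;> linarith
    · rw [abs_of_pos (by linarith)]; constructor <;> linarith
  have hx2gt : lamM ^ 2 < x ^ 2 := by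
    have h := hxx.1
    have h2 : lamM ^ 2 < |x| ^ 2 := by nlinarith [abs_nonneg x]
    simpa [sq_abs] using h2
  have hx2lt : x ^ 2 < lamP ^ 2 := by
    have h := hxx.2
    have h2 : |x| ^ 2 < lamP ^ 2 := by nlinarith [abs_nonneg x]
    simpa [sq_abs] using h2
  refine ⟨?_, by nlinarith, hQlt⟩
  rcases eq_or_lt_of_le hm with hm0 | hmpos
  · have h := hSm0 hm0.symm
    nlinarith
  · nlinarith [hSlt hmpos]

set_option maxHeartbeats 4000000 in
/-- If `0 < ‖V‖₁² < m²/2 + 1 − m√(m²/4 + 1)`, then `D_V` has no eigenvalue in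
`(−λ₊, −λ₋) ∪ (λ₋, λ₊)`. -/
theorem stmt1 (m : ℝ) (hm : 0 ≤ m) (υ : ℤ → Mat2)
    (hsum : Summable fun n => specNorm (υ n))
    (Q : ℝ) (hQ : Q = ∑' n, specNorm (υ n))
    (hpos : 0 < Q ^ 2)
    (hsmall : Q ^ 2 < m ^ 2 / 2 + 1 - m * Real.sqrt (m ^ 2 / 4 + 1))
    (lamP lamM : ℝ)
    (hlamP : lamP =
      Real.sqrt (m ^ 2 + 2 * (1 - Q ^ 2 + Real.sqrt ((1 - Q ^ 2) ^ 2 - Q ^ 2 * m ^ 2))))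
    (hlamM : lamM =
      Real.sqrt (m ^ 2 + 2 * (1 - Q ^ 2 - Real.sqrt ((1 - Q ^ 2) ^ 2 - Q ^ 2 * m ^ 2))))
    (D0 Vop : Hsp →L[ℂ] Hsp) (hD0 : IsFreeDirac m D0) (hVop : IsBlockDiagOp υ Vop)
    (x : ℝ) (hx : x ∈ Set.Ioo (-lamP) (-lamM) ∪ Set.Ioo lamM lamP) :
    ¬ ∃ ψ : Hsp, ψ ≠ 0 ∧ (D0 + Vop) ψ = (x : ℂ) • ψ := by
  rintro ⟨ψ, hψ0, hEig⟩
  classical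
  have hQ0 : 0 ≤ Q := hQ ▸ tsum_nonneg fun n => norm_nonneg _
  obtain ⟨hm2x, hx2m4, hQlt1⟩ := window_aux m Q x lamP lamM hm hQ0 hpos hsmall hlamP hlamM hx
  set vn : ℤ → ℝ := fun n => specNorm (υ n) with hvndef
  have hvn0 : ∀ n, 0 ≤ vn n := fun n => norm_nonneg _
  have hvleQ : ∀ n, vn n ≤ Q := by
    intro n
    rw [hQ]
    exact Summable.le_tsum hsum n fun j _ => norm_nonneg _
  set f : ℤ → ℂ := fun n => ψ n 0 with hfdef
  set g : ℤ → ℂ := fun n => ψ n 1 with hgdef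
  -- the pointwise eigenvalue equation
  have hpt : ∀ n : ℤ, mAct aMat.transpose (ψ (n-1)) + mAct (bMat m) (ψ n) + mAct aMat (ψ (n+1))
      + mAct (υ n) (ψ n) = (x:ℂ) • ψ n := by
    intro n
    have h1 : ((D0 + Vop) ψ) n = (((x:ℂ) • ψ : Hsp)) n := by rw [hEig]
    rw [ContinuousLinearMap.add_apply, lp.coeFn_add, Pi.add_apply, lp.coeFn_smul,
      Pi.smul_apply, hD0 ψ n, hVop ψ n] at h1
    linear_combination (norm := module) h1
  have eq1 : ∀ n : ℤ, -(g (n-1)) - (m:ℂ) * f n + g n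
      + (υ n 0 0 * f n + υ n 0 1 * g n) = (x:ℂ) * f n := by
    intro n
    have h := congrArg (fun v : Vec2 => v 0) (hpt n)
    simp only [PiLp.add_apply, PiLp.smul_apply, mAct_apply', smul_eq_mul] at h
    rw [show aMat.transpose 0 0 = 0 by simp [aMat], show aMat.transpose 0 1 = -1 by simp [aMat],
      show (bMat m) 0 0 = -(m:ℂ) by simp [bMat], show (bMat m) 0 1 = 1 by simp [bMat],
      show aMat 0 0 = 0 by simp [aMat], show aMat 0 1 = 0 by simp [aMat]] at h
    linear_combination h
  have eq2 : ∀ n : ℤ, f n + (m:ℂ) * g n - f (n+1)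
      + (υ n 1 0 * f n + υ n 1 1 * g n) = (x:ℂ) * g n := by
    intro n
    have h := congrArg (fun v : Vec2 => v 1) (hpt n)
    simp only [PiLp.add_apply, PiLp.smul_apply, mAct_apply', smul_eq_mul] at h
    rw [show aMat.transpose 1 0 = 0 by simp [aMat], show aMat.transpose 1 1 = 0 by simp [aMat],
      show (bMat m) 1 0 = 1 by simp [bMat], show (bMat m) 1 1 = (m:ℂ) by simp [bMat],
      show aMat 1 0 = -1 by simp [aMat], show aMat 1 1 = 0 by simp [aMat]] at h
    linear_combination h
  obtain ⟨w1, hw1def⟩ : ∃ w1 : ℤ → ℂ, ∀ n, w1 n = υ n 0 0 * f n + υ n 0 1 * g n :=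
    ⟨_, fun n => rfl⟩
  obtain ⟨w2, hw2def⟩ : ∃ w2 : ℤ → ℂ, ∀ n, w2 n = υ n 1 0 * f n + υ n 1 1 * g n :=
    ⟨_, fun n => rfl⟩
  have hgs : ∀ n : ℤ, g n = g (n-1) + ((x:ℂ) + (m:ℂ)) * f n - w1 n := by
    intro n; rw [hw1def]; linear_combination eq1 n
  have hfs : ∀ n : ℤ, f (n+1) = f n + ((m:ℂ) - (x:ℂ)) * g n + w2 n := by
    intro n; rw [hw2def]; linear_combination - eq2 n
  -- construction of k on the unit circle
  set cr : ℝ := (2 - (x^2 - m^2))/2 with hcrdef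
  have hcrlt1 : -1 < cr := by rw [hcrdef]; linarith only [hx2m4]
  have hcrlt2 : cr < 1 := by rw [hcrdef]; linarith only [hm2x]
  have hcr2 : 0 < 1 - cr^2 := by nlinarith only [hcrlt1, hcrlt2]
  set sr : ℝ := Real.sqrt (1 - cr^2) with hsrdef
  have hsr : 0 < sr := Real.sqrt_pos.mpr hcr2
  have hsr2 : sr^2 = 1 - cr^2 := Real.sq_sqrt hcr2.le
  set k : ℂ := (cr:ℂ) + (sr:ℂ) * Complex.I with hkdef
  set kb : ℂ := (cr:ℂ) - (sr:ℂ) * Complex.I with hkbdef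
  have hkkb : k * kb = 1 := by
    rw [hkdef, hkbdef]
    have h : ((cr:ℂ) + sr * Complex.I) * ((cr:ℂ) - sr * Complex.I)
        = ((cr^2 + sr^2 : ℝ) : ℂ) := by
      push_cast
      ring_nf
      rw [Complex.I_sq]
      ring
    rw [h, show cr^2 + sr^2 = 1 by linarith only [hsr2]]
    norm_num
  have hksum : k + kb = 2 - (x:ℂ)^2 + (m:ℂ)^2 := by
    have h1 : cr + cr = 2 - x^2 + m^2 := by rw [hcrdef]; ring
    have h2 := congrArg (Complex.ofReal) h1
    push_cast at h2
    rw [hkdef, hkbdef]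
    linear_combination h2
  have hquad : k^2 + 1 = (2 - (x:ℂ)^2 + (m:ℂ)^2) * k := by
    calc k^2 + 1 = k * (k + kb) := by rw [← hkkb]; ring
    _ = _ := by rw [hksum]; ring
  have hquadb : kb^2 + 1 = (2 - (x:ℂ)^2 + (m:ℂ)^2) * kb := by
    calc kb^2 + 1 = kb * (k + kb) := by rw [← hkkb]; ring
    _ = _ := by rw [hksum]; ring
  have hknorm : ‖k‖ = 1 := by
    rw [hkdef, Complex.norm_def, Complex.normSq_add_mul_I,
      show cr^2 + sr^2 = 1 by linarith only [hsr2], Real.sqrt_one]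
  have hkbnorm : ‖kb‖ = 1 := by
    rw [hkbdef,
      show (cr:ℂ) - (sr:ℂ) * Complex.I = (cr:ℂ) + ((-sr : ℝ):ℂ) * Complex.I by push_cast; ring,
      Complex.norm_def, Complex.normSq_add_mul_I,
      show cr^2 + (-sr)^2 = 1 by linarith only [hsr2], Real.sqrt_one]
  have hkkbdiff : ‖k - kb‖ = 2 * sr := by
    rw [hkdef, hkbdef]
    rw [show (cr:ℂ) + (sr:ℂ) * Complex.I - ((cr:ℂ) - (sr:ℂ) * Complex.I)
      = ((2*sr : ℝ):ℂ) * Complex.I by push_cast; ring]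
    rw [norm_mul, Complex.norm_real, Complex.norm_I, mul_one]
    rw [Real.norm_eq_abs, abs_of_pos (by linarith only [hsr])]
  have hk1le : ‖k - 1‖ ≤ 2 := by
    calc ‖k - 1‖ ≤ ‖k‖ + ‖(1:ℂ)‖ := norm_sub_le _ _
    _ = 2 := by rw [hknorm, norm_one]; norm_num
  have hkb1le : ‖kb - 1‖ ≤ 2 := by
    calc ‖kb - 1‖ ≤ ‖kb‖ + ‖(1:ℂ)‖ := norm_sub_le _ _
    _ = 2 := by rw [hkbnorm, norm_one]; norm_num
  set mxc : ℂ := (m:ℂ) - (x:ℂ) with hmxcdef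
  have hmxc : mxc ≠ 0 := by
    rw [hmxcdef]
    intro h
    have h1 : (m:ℂ) = (x:ℂ) := by linear_combination h
    have hmx : m = x := by exact_mod_cast h1
    rw [hmx] at hm2x
    linarith only [hm2x]
  set a : ℝ := ‖mxc‖ with hadef
  have ha : 0 < a := norm_pos_iff.mpr hmxc
  set A2 : ℝ := ‖(x:ℂ) + (m:ℂ)‖ with hA2def
  have hA20 : 0 ≤ A2 := norm_nonneg _
  -- eigen-coordinates
  obtain ⟨p, hpdef⟩ : ∃ p : ℤ → ℂ, ∀ n, p n = (k - 1) * f n + mxc * g (n-1) :=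
    ⟨_, fun n => rfl⟩
  obtain ⟨q, hqdef⟩ : ∃ q : ℤ → ℂ, ∀ n, q n = (kb - 1) * f n + mxc * g (n-1) :=
    ⟨_, fun n => rfl⟩
  obtain ⟨r, hrdef⟩ : ∃ r : ℤ → ℝ, ∀ n, r n = ‖p n‖ + ‖q n‖ := ⟨_, fun n => rfl⟩
  have hr0 : ∀ n, 0 ≤ r n := fun n => hrdef n ▸ add_nonneg (norm_nonneg _) (norm_nonneg _)
  have hprec : ∀ n : ℤ, p (n+1) = k * p n - k * mxc * w1 n + (k-1) * w2 n := by
    intro n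
    rw [hpdef, hpdef, hmxcdef, show n+1-1 = n by ring, hfs n, hgs n]
    linear_combination (- f n) * hquad
  have hqrec : ∀ n : ℤ, q (n+1) = kb * q n - kb * mxc * w1 n + (kb-1) * w2 n := by
    intro n
    rw [hqdef, hqdef, hmxcdef, show n+1-1 = n by ring, hfs n, hgs n]
    linear_combination (- f n) * hquadb
  have hOneQ : 0 < 1 - Q := by linarith only [hQlt1]
  set Cf : ℝ := 1/(2*sr) with hCfdef
  have hCf : 0 < Cf := by rw [hCfdef]; positivity
  have hfr : ∀ n, ‖f n‖ ≤ Cf * r n := by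
    intro n
    have e : p n - q n = (k - kb) * f n := by rw [hpdef, hqdef]; ring
    have h1 : ‖(k - kb) * f n‖ ≤ r n := by
      rw [← e, hrdef]; exact norm_sub_le _ _
    rw [norm_mul, hkkbdiff] at h1
    rw [hCfdef, div_mul_eq_mul_div, le_div_iff₀ (by linarith only [hsr])]
    linarith only [h1]
  set Cg1 : ℝ := (1 + 2*Cf)/a with hCg1def
  have hCg1 : 0 ≤ Cg1 := by rw [hCg1def]; positivity
  have hg1r : ∀ n, ‖g (n-1)‖ ≤ Cg1 * r n := by
    intro n
    have e : mxc * g (n-1) = p n - (k - 1) * f n := by rw [hpdef]; ring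
    have h1 : ‖mxc * g (n-1)‖ ≤ ‖p n‖ + ‖(k-1) * f n‖ := by rw [e]; exact norm_sub_le _ _
    rw [norm_mul, norm_mul, ← hadef] at h1
    have h2 : ‖k-1‖ * ‖f n‖ ≤ 2 * (Cf * r n) :=
      mul_le_mul hk1le (hfr n) (norm_nonneg _) (by norm_num)
    have h3 : ‖p n‖ ≤ r n := by rw [hrdef]; linarith only [norm_nonneg (q n)]
    rw [hCg1def, div_mul_eq_mul_div, le_div_iff₀ ha]
    linarith only [h1, h2, h3]
  set Cg : ℝ := (Cg1 + (A2 + Q) * Cf)/(1 - Q) with hCgdef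
  have hCg : 0 ≤ Cg := by
    rw [hCgdef]
    have h1 : 0 ≤ Cg1 + (A2 + Q) * Cf := by
      have : 0 ≤ (A2 + Q) * Cf := mul_nonneg (by linarith only [hA20, hQ0]) hCf.le
      linarith only [hCg1, this]
    exact div_nonneg h1 hOneQ.le
  have hgr : ∀ n, ‖g n‖ ≤ Cg * r n := by
    intro n
    have hb1 : ‖w1 n‖ ≤ vn n * ‖f n‖ + vn n * ‖g n‖ := by
      rw [hw1def]
      calc ‖υ n 0 0 * f n + υ n 0 1 * g n‖ ≤ ‖υ n 0 0 * f n‖ + ‖υ n 0 1 * g n‖ :=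
            norm_add_le _ _
        _ = ‖υ n 0 0‖ * ‖f n‖ + ‖υ n 0 1‖ * ‖g n‖ := by rw [norm_mul, norm_mul]
        _ ≤ vn n * ‖f n‖ + vn n * ‖g n‖ := by
            have e1 := entry_le_specNorm (υ n) 0 0
            have e2 := entry_le_specNorm (υ n) 0 1
            have t1 : ‖υ n 0 0‖ * ‖f n‖ ≤ vn n * ‖f n‖ :=
              mul_le_mul_of_nonneg_right e1 (norm_nonneg _)
            have t2 : ‖υ n 0 1‖ * ‖g n‖ ≤ vn n * ‖g n‖ :=
              mul_le_mul_of_nonneg_right e2 (norm_nonneg _)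
            linarith only [t1, t2]
    have h1 : ‖g n‖ ≤ ‖g (n-1)‖ + A2 * ‖f n‖ + ‖w1 n‖ := by
      rw [hgs n]
      calc ‖g (n-1) + ((x:ℂ)+(m:ℂ)) * f n - w1 n‖
          ≤ ‖g (n-1) + ((x:ℂ)+(m:ℂ)) * f n‖ + ‖w1 n‖ := norm_sub_le _ _
        _ ≤ ‖g (n-1)‖ + ‖((x:ℂ)+(m:ℂ)) * f n‖ + ‖w1 n‖ := by
            have := norm_add_le (g (n-1)) (((x:ℂ)+(m:ℂ)) * f n)
            linarith only [this]
        _ = ‖g (n-1)‖ + A2 * ‖f n‖ + ‖w1 n‖ := by rw [norm_mul, ← hA2def]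
    have hvfn : vn n * ‖f n‖ ≤ Q * ‖f n‖ :=
      mul_le_mul_of_nonneg_right (hvleQ n) (norm_nonneg _)
    have hvgn : vn n * ‖g n‖ ≤ Q * ‖g n‖ :=
      mul_le_mul_of_nonneg_right (hvleQ n) (norm_nonneg _)
    have hA2f : A2 * ‖f n‖ ≤ A2 * (Cf * r n) := mul_le_mul_of_nonneg_left (hfr n) hA20
    have hQf : Q * ‖f n‖ ≤ Q * (Cf * r n) := mul_le_mul_of_nonneg_left (hfr n) hQ0
    have hgn1 := hg1r n
    have h2 : (1 - Q) * ‖g n‖ ≤ Cg1 * r n + (A2 + Q) * (Cf * r n) := by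
      linarith only [h1, hb1, hvfn, hvgn, hA2f, hQf, hgn1]
    rw [hCgdef, div_mul_eq_mul_div, le_div_iff₀ hOneQ]
    linarith only [h2]
  set W : ℝ := Cf + Cg with hWdef
  have hW : 0 < W := by rw [hWdef]; linarith only [hCf, hCg]
  have hw1b : ∀ n, ‖w1 n‖ ≤ vn n * (W * r n) := by
    intro n
    rw [hw1def]
    have t1 : ‖υ n 0 0‖ * ‖f n‖ ≤ vn n * (Cf * r n) :=
      mul_le_mul (entry_le_specNorm (υ n) 0 0) (hfr n) (norm_nonneg _) (hvn0 n)
    have t2 : ‖υ n 0 1‖ * ‖g n‖ ≤ vn n * (Cg * r n) :=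
      mul_le_mul (entry_le_specNorm (υ n) 0 1) (hgr n) (norm_nonneg _) (hvn0 n)
    calc ‖υ n 0 0 * f n + υ n 0 1 * g n‖ ≤ ‖υ n 0 0‖ * ‖f n‖ + ‖υ n 0 1‖ * ‖g n‖ := by
          refine le_trans (norm_add_le _ _) ?_
          rw [norm_mul, norm_mul]
      _ ≤ vn n * (Cf * r n) + vn n * (Cg * r n) := by linarith only [t1, t2]
      _ = vn n * (W * r n) := by rw [hWdef]; ring
  have hw2b : ∀ n, ‖w2 n‖ ≤ vn n * (W * r n) := by
    intro n
    rw [hw2def]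
    have t1 : ‖υ n 1 0‖ * ‖f n‖ ≤ vn n * (Cf * r n) :=
      mul_le_mul (entry_le_specNorm (υ n) 1 0) (hfr n) (norm_nonneg _) (hvn0 n)
    have t2 : ‖υ n 1 1‖ * ‖g n‖ ≤ vn n * (Cg * r n) :=
      mul_le_mul (entry_le_specNorm (υ n) 1 1) (hgr n) (norm_nonneg _) (hvn0 n)
    calc ‖υ n 1 0 * f n + υ n 1 1 * g n‖ ≤ ‖υ n 1 0‖ * ‖f n‖ + ‖υ n 1 1‖ * ‖g n‖ := by
          refine le_trans (norm_add_le _ _) ?_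
          rw [norm_mul, norm_mul]
      _ ≤ vn n * (Cf * r n) + vn n * (Cg * r n) := by linarith only [t1, t2]
      _ = vn n * (W * r n) := by rw [hWdef]; ring
  set K : ℝ := 2*(a+2)*W with hKdef
  have hK : 0 ≤ K := by
    rw [hKdef]
    have : 0 ≤ a + 2 := by linarith only [ha]
    nlinarith only [this, hW]
  obtain ⟨cns, hcnsdef⟩ : ∃ cns : ℤ → ℝ, ∀ n, cns n = K * vn n := ⟨_, fun n => rfl⟩
  have hcns0 : ∀ n, 0 ≤ cns n := fun n => hcnsdef n ▸ mul_nonneg hK (hvn0 n)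
  have hcnssum : Summable cns := by
    have h : Summable (fun n => K * vn n) := hsum.mul_left K
    exact h.congr fun n => (hcnsdef n).symm
  have hrrec : ∀ n : ℤ, (1 - cns n) * r n ≤ r (n+1) := by
    intro n
    have hp1 : ‖p n‖ ≤ ‖p (n+1)‖ + a * ‖w1 n‖ + 2 * ‖w2 n‖ := by
      have e : k * p n = p (n+1) + k * mxc * w1 n - (k-1) * w2 n := by rw [hprec n]; ring
      have h5 : ‖p (n+1) + k * mxc * w1 n‖ ≤ ‖p (n+1)‖ + ‖k * mxc * w1 n‖ := norm_add_le _ _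
      have h6 : ‖k * mxc * w1 n‖ = a * ‖w1 n‖ := by
        rw [norm_mul, norm_mul, hknorm, one_mul, ← hadef]
      have h7 : ‖(k-1) * w2 n‖ ≤ 2 * ‖w2 n‖ := by
        rw [norm_mul]
        exact mul_le_mul_of_nonneg_right hk1le (norm_nonneg _)
      have h8 : ‖p n‖ = ‖p (n+1) + k * mxc * w1 n - (k-1) * w2 n‖ := by
        rw [← e, norm_mul, hknorm, one_mul]
      have h9 := norm_sub_le (p (n+1) + k * mxc * w1 n) ((k-1) * w2 n)
      rw [← h8] at h9
      rw [h6] at h5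
      linarith only [h5, h7, h9]
    have hq1 : ‖q n‖ ≤ ‖q (n+1)‖ + a * ‖w1 n‖ + 2 * ‖w2 n‖ := by
      have e : kb * q n = q (n+1) + kb * mxc * w1 n - (kb-1) * w2 n := by rw [hqrec n]; ring
      have h5 : ‖q (n+1) + kb * mxc * w1 n‖ ≤ ‖q (n+1)‖ + ‖kb * mxc * w1 n‖ := norm_add_le _ _
      have h6 : ‖kb * mxc * w1 n‖ = a * ‖w1 n‖ := by
        rw [norm_mul, norm_mul, hkbnorm, one_mul, ← hadef]
      have h7 : ‖(kb-1) * w2 n‖ ≤ 2 * ‖w2 n‖ := by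
        rw [norm_mul]
        exact mul_le_mul_of_nonneg_right hkb1le (norm_nonneg _)
      have h8 : ‖q n‖ = ‖q (n+1) + kb * mxc * w1 n - (kb-1) * w2 n‖ := by
        rw [← e, norm_mul, hkbnorm, one_mul]
      have h9 := norm_sub_le (q (n+1) + kb * mxc * w1 n) ((kb-1) * w2 n)
      rw [← h8] at h9
      rw [h6] at h5
      linarith only [h5, h7, h9]
    have t1 : a * ‖w1 n‖ ≤ a * (vn n * (W * r n)) :=
      mul_le_mul_of_nonneg_left (hw1b n) ha.le
    have t2 : 2 * ‖w2 n‖ ≤ 2 * (vn n * (W * r n)) :=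
      mul_le_mul_of_nonneg_left (hw2b n) (by norm_num)
    have h4 : r n ≤ r (n+1) + (2*(a+2)) * (vn n * (W * r n)) := by
      have hrn := hrdef n
      have hrn1 := hrdef (n+1)
      linarith only [hp1, hq1, t1, t2, hrn, hrn1]
    rw [hcnsdef, hKdef]
    have he : (1 - 2*(a+2)*W * vn n) * r n = r n - (2*(a+2)) * (vn n * (W * r n)) := by ring
    rw [he]
    linarith only [h4]
  -- ψ tends to zero at infinity
  have hnt : Filter.Tendsto (fun n : ℤ => ‖ψ n‖) Filter.atTop (nhds 0) := by
    have hmem : Memℓp (fun n => ψ n) 2 := lp.memℓp ψ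
    have hsq : Summable fun n : ℤ => ‖ψ n‖ ^ (2:ENNReal).toReal := hmem.summable (by norm_num)
    have h0 : Filter.Tendsto (fun n : ℤ => ‖ψ n‖ ^ (2:ENNReal).toReal) Filter.cofinite (nhds 0) :=
      hsq.tendsto_cofinite_zero
    have h1 : Filter.Tendsto (fun n : ℤ => ‖ψ n‖ ^ (2:ENNReal).toReal) Filter.atTop (nhds 0) :=
      h0.mono_left (Int.cofinite_eq ▸ le_sup_right)
    have h2 := h1.sqrt
    rw [Real.sqrt_zero] at h2
    convert h2 using 2 with n
    rw [show (2:ENNReal).toReal = ((2:ℕ):ℝ) by norm_num, Real.rpow_natCast,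
      Real.sqrt_sq (norm_nonneg _)]
  have hrb : ∀ n : ℤ, r n ≤ (2*(2+a)) * (‖ψ n‖ + ‖ψ (n-1)‖) := by
    intro n
    have hfψ : ‖f n‖ ≤ ‖ψ n‖ := coord_le_norm' (ψ n) 0
    have hgψ : ‖g (n-1)‖ ≤ ‖ψ (n-1)‖ := coord_le_norm' (ψ (n-1)) 1
    have hk1f : ‖k-1‖ * ‖f n‖ ≤ 2 * ‖ψ n‖ := by
      have s1 : ‖k-1‖ * ‖f n‖ ≤ 2 * ‖f n‖ := mul_le_mul_of_nonneg_right hk1le (norm_nonneg _)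
      linarith only [s1, hfψ]
    have hkb1f : ‖kb-1‖ * ‖f n‖ ≤ 2 * ‖ψ n‖ := by
      have s1 : ‖kb-1‖ * ‖f n‖ ≤ 2 * ‖f n‖ := mul_le_mul_of_nonneg_right hkb1le (norm_nonneg _)
      linarith only [s1, hfψ]
    have hag : a * ‖g (n-1)‖ ≤ a * ‖ψ (n-1)‖ := mul_le_mul_of_nonneg_left hgψ ha.le
    have hp1 : ‖p n‖ ≤ 2 * ‖ψ n‖ + a * ‖ψ (n-1)‖ := by
      rw [hpdef]
      calc ‖(k-1) * f n + mxc * g (n-1)‖ ≤ ‖(k-1) * f n‖ + ‖mxc * g (n-1)‖ := norm_add_le _ _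
        _ = ‖k-1‖ * ‖f n‖ + a * ‖g (n-1)‖ := by rw [norm_mul, norm_mul, ← hadef]
        _ ≤ 2 * ‖ψ n‖ + a * ‖ψ (n-1)‖ := by linarith only [hk1f, hag]
    have hq1 : ‖q n‖ ≤ 2 * ‖ψ n‖ + a * ‖ψ (n-1)‖ := by
      rw [hqdef]
      calc ‖(kb-1) * f n + mxc * g (n-1)‖ ≤ ‖(kb-1) * f n‖ + ‖mxc * g (n-1)‖ := norm_add_le _ _
        _ = ‖kb-1‖ * ‖f n‖ + a * ‖g (n-1)‖ := by rw [norm_mul, norm_mul, ← hadef]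
        _ ≤ 2 * ‖ψ n‖ + a * ‖ψ (n-1)‖ := by linarith only [hkb1f, hag]
    rw [hrdef]
    have t1 : 0 ≤ a * ‖ψ n‖ := mul_nonneg ha.le (norm_nonneg _)
    have t2 : 0 ≤ ‖ψ (n-1)‖ := norm_nonneg _
    linarith only [hp1, hq1, t1, t2]
  -- choose the tail cutoff
  obtain ⟨s, hs⟩ := summable_iff_vanishing_norm.mp hcnssum (1/2) (by norm_num)
  obtain ⟨B, hB⟩ := (s : Set ℤ).toFinite.bddAbove
  have hrzero : ∀ M : ℤ, B < M → r M = 0 := by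
    intro M hBM
    have hsumtail : ∀ n : ℕ, (∑ j ∈ Finset.range n, cns (M + j)) ≤ 1/2 := by
      intro n
      set t : Finset ℤ := (Finset.range n).image (fun j : ℕ => M + (j:ℤ)) with htdef
      have hinj : ∀ x ∈ Finset.range n, ∀ y ∈ Finset.range n,
          M + (x:ℤ) = M + (y:ℤ) → x = y := by
        intro u _ v _ h
        omega
      have hsumt : (∑ j ∈ t, cns j) = ∑ j ∈ Finset.range n, cns (M + j) := by
        rw [htdef, Finset.sum_image hinj]
      have hdisj : Disjoint t s := by
        rw [Finset.disjoint_left]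
        intro z hz hzs
        rw [htdef, Finset.mem_image] at hz
        obtain ⟨j, _, rfl⟩ := hz
        have := hB hzs
        omega
      have h1 := hs t hdisj
      rw [Real.norm_eq_abs] at h1
      have h2 := le_abs_self (∑ j ∈ t, cns j)
      rw [hsumt] at h2 h1
      linarith only [h1, h2]
    have hlim : Filter.Tendsto (fun j : ℕ => r (M + j)) Filter.atTop (nhds 0) := by
      have htt : Filter.Tendsto (fun j : ℕ => M + (j:ℤ)) Filter.atTop Filter.atTop :=
        Filter.tendsto_atTop_add_const_left _ M tendsto_natCast_atTop_atTop
      have h1 : Filter.Tendsto (fun j : ℕ => ‖ψ (M + j)‖) Filter.atTop (nhds 0) :=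
        hnt.comp htt
      have h2 : Filter.Tendsto (fun j : ℕ => ‖ψ (M + j - 1)‖) Filter.atTop (nhds 0) := by
        have htt2 : Filter.Tendsto (fun j : ℕ => M + (j:ℤ) - 1) Filter.atTop Filter.atTop :=
          Filter.tendsto_atTop_add_const_right _ (-1) htt
        exact hnt.comp htt2
      have h3 : Filter.Tendsto (fun j : ℕ => (2*(2+a)) * (‖ψ (M + j)‖ + ‖ψ (M + j - 1)‖))
          Filter.atTop (nhds 0) := by
        have h4 := (h1.add h2).const_mul (2*(2+a))
        simpa using h4
      exact squeeze_zero (fun j => hr0 _) (fun j => hrb (M + j)) h3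
    have h0 := levinson_aux (fun j => r (M + j)) (fun j => cns (M + j))
      (fun j => hr0 _) (fun j => hcns0 _)
      (fun j => by
        have h5 := hrrec (M + j)
        have he : (M + ((j:ℤ)+1)) = (M + j) + 1 := by ring
        push_cast
        rw [he]
        exact h5)
      hsumtail hlim
    simpa using h0
  have hfgzero : ∀ M : ℤ, B < M → f M = 0 ∧ g (M-1) = 0 := by
    intro M hBM
    have hrM := hrzero M hBM
    rw [hrdef] at hrM
    have hp0 : p M = 0 := by
      have h1 : ‖p M‖ = 0 := by linarith only [hrM, norm_nonneg (p M), norm_nonneg (q M)]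
      exact norm_eq_zero.mp h1
    have hq0 : q M = 0 := by
      have h1 : ‖q M‖ = 0 := by linarith only [hrM, norm_nonneg (p M), norm_nonneg (q M)]
      exact norm_eq_zero.mp h1
    have hkkbne : k - kb ≠ 0 := by
      intro h
      rw [h, norm_zero] at hkkbdiff
      linarith only [hkkbdiff, hsr]
    have hf0 : f M = 0 := by
      have e : (k - kb) * f M = p M - q M := by rw [hpdef, hqdef]; ring
      rw [hp0, hq0, sub_zero] at e
      exact (mul_eq_zero.mp e).resolve_left hkkbne
    refine ⟨hf0, ?_⟩
    have e : mxc * g (M-1) = p M - (k-1) * f M := by rw [hpdef]; ring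
    rw [hp0, hf0, mul_zero, sub_zero] at e
    exact (mul_eq_zero.mp e).resolve_left hmxc
  have hstep : ∀ n : ℤ, (f n = 0 ∧ g (n-1) = 0) → (f (n-1) = 0 ∧ g (n-1-1) = 0) := by
    intro n hn
    obtain ⟨hfn, hgn1⟩ := hn
    have he2 := eq2 (n-1)
    rw [show n-1+1 = n by ring, hfn, hgn1] at he2
    have hf1 : (1 + υ (n-1) 1 0) * f (n-1) = 0 := by linear_combination he2
    have hne : (1 + υ (n-1) 1 0) ≠ 0 := by
      intro h
      have h2 : υ (n-1) 1 0 = -1 := by linear_combination h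
      have h3 := entry_le_specNorm (υ (n-1)) 1 0
      rw [h2] at h3
      simp only [norm_neg, norm_one] at h3
      have h4 := hvleQ (n-1)
      rw [hvndef] at h4
      simp only at h4
      linarith only [h3, h4, hQlt1]
    have hf0 : f (n-1) = 0 := (mul_eq_zero.mp hf1).resolve_left hne
    have he1 := eq1 (n-1)
    rw [hf0, hgn1] at he1
    refine ⟨hf0, ?_⟩
    linear_combination - he1
  have hdown : ∀ j : ℕ, f (B + 1 - j) = 0 ∧ g (B + 1 - j - 1) = 0 := by
    intro j
    induction j with
    | zero => simpa using hfgzero (B+1) (lt_add_one B)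
    | succ j ih =>
      have h := hstep _ ih
      have he : B + 1 - ((j:ℤ)+1) = B + 1 - j - 1 := by ring
      push_cast
      rw [he]
      exact h
  have hall : ∀ n : ℤ, f n = 0 ∧ g (n-1) = 0 := by
    intro n
    rcases lt_or_ge B n with h | h
    · exact hfgzero n h
    · have hj : 0 ≤ B + 1 - n := by omega
      obtain ⟨j, hjeq⟩ : ∃ j : ℕ, (j:ℤ) = B + 1 - n := ⟨(B + 1 - n).toNat, Int.toNat_of_nonneg hj⟩
      have h5 := hdown j
      rw [show B + 1 - (j:ℤ) = n by omega] at h5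
      exact h5
  apply hψ0
  apply lp.ext
  funext n
  have h1 : f n = 0 := (hall n).1
  have h2 : g n = 0 := by
    have h3 := (hall (n+1)).2
    rwa [show n+1-1 = n by ring] at h3
  rw [hfdef] at h1
  rw [hgdef] at h2
  simp only at h1 h2
  have hcoord : ∀ i : Fin 2, ψ n i = 0 := by
    intro i
    fin_cases i
    · exact h1
    · exact h2
  ext i
  rw [hcoord i]
  simp [lp.coeFn_zero]
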